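/- Derivative of the deviation matrix: let n ≥ 1 and t₀ ∈ ℝ. Let P : ℝ → (n×n real matrices) and π : ℝ → ℝⁿ (row vectors) both be differentiable at t₀, with derivatives P′ and π′ at t₀. Assume there is a neighborhood U of t₀ such that for all t ∈ U: every row of P(t) sums to 1, the entries of π(t) sum to 1, π(t)·P(t) = π(t), and A(t) = I − P(t) + 1·π(t) is invertible. Define D(t) = A(t)⁻¹ − 1·π(t). Then D is differentiable at t₀ with derivative D′ = D₀·P′·D₀ − Π·P′·D₀·D₀, where D₀ = D(t₀) and Π = 1·π(t₀); equivalently, D′ = −Π′·D₀ + D₀·P′·D₀ with Π′ = Π·P′·D₀. -/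

import Mathlib

open Matrix Finset

private lemma det_diffAt {n : ℕ} (M : ℝ → Matrix (Fin n) (Fin n) ℝ) (t0 : ℝ)
    (h : ∀ i j, DifferentiableAt ℝ (fun t => M t i j) t0) :
    DifferentiableAt ℝ (fun t => (M t).det) t0 := by
  simp only [Matrix.det_apply']
  exact DifferentiableAt.fun_sum fun σ _ =>
    (DifferentiableAt.fun_finsetProd (fun i _ => h (σ i) i)).const_mul _

theorem deviation_matrix_derivative {n : ℕ} (hn : 1 ≤ n) (t0 : ℝ)
    (P : ℝ → Matrix (Fin n) (Fin n) ℝ) (pi : ℝ → Fin n → ℝ)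
    (P' : Matrix (Fin n) (Fin n) ℝ) (pi' : Fin n → ℝ)
    (hP : ∀ i j, HasDerivAt (fun t => P t i j) (P' i j) t0)
    (hpi : ∀ i, HasDerivAt (fun t => pi t i) (pi' i) t0)
    (U : Set ℝ) (hU : U ∈ nhds t0)
    (hrow : ∀ t ∈ U, ∀ i, ∑ j, P t i j = 1)
    (hsum : ∀ t ∈ U, ∑ i, pi t i = 1)
    (hstat : ∀ t ∈ U, Matrix.vecMul (pi t) (P t) = pi t)
    (hinv : ∀ t ∈ U, IsUnit (1 - P t + Matrix.of fun _ j => pi t j))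
    (D : ℝ → Matrix (Fin n) (Fin n) ℝ)
    (hD : ∀ t, D t = (1 - P t + Matrix.of fun _ j => pi t j)⁻¹
        - Matrix.of fun _ j => pi t j) :
    ∀ i j, HasDerivAt (fun t => D t i j)
      ((D t0 * P' * D t0
        - (Matrix.of fun _ j => pi t0 j) * P' * D t0 * D t0
        : Matrix (Fin n) (Fin n) ℝ) i j) t0 := by
  have ht0U : t0 ∈ U := mem_of_mem_nhds hU
  set A : ℝ → Matrix (Fin n) (Fin n) ℝ :=
    fun t => 1 - P t + Matrix.of fun _ j => pi t j with hAdef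
  set Pi0 : Matrix (Fin n) (Fin n) ℝ := Matrix.of fun _ j => pi t0 j with hPi0
  set Pi1 : Matrix (Fin n) (Fin n) ℝ := Matrix.of fun _ j => pi' j with hPi1
  set A' : Matrix (Fin n) (Fin n) ℝ := -P' + Pi1 with hA'def
  -- entrywise derivative of A
  have hAent : ∀ i j, HasDerivAt (fun t => A t i j) (A' i j) t0 := by
    intro i j
    have h1 : HasDerivAt (fun t => (1 : Matrix (Fin n) (Fin n) ℝ) i j - P t i j + pi t j)
        (0 - P' i j + pi' j) t0 :=
      ((hasDerivAt_const t0 _).sub (hP i j)).add (hpi j)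
    have : (fun t => A t i j)
        = fun t => (1 : Matrix (Fin n) (Fin n) ℝ) i j - P t i j + pi t j := by
      funext t
      simp [hAdef, Matrix.add_apply, Matrix.sub_apply]
    rw [this]
    convert h1 using 1
    simp [hA'def, hPi1, Matrix.add_apply, Matrix.neg_apply]
  -- determinant nonzero at points of U
  have hdetU : ∀ t ∈ U, IsUnit (A t).det := fun t ht =>
    (Matrix.isUnit_iff_isUnit_det _).mp (hinv t ht)
  have hdet0 : (A t0).det ≠ 0 := (hdetU t0 ht0U).ne_zero
  -- entries of the inverse are differentiable
  have hinvdiff : ∀ i j, DifferentiableAt ℝ (fun t => (A t)⁻¹ i j) t0 := by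
    intro i j
    have hadj : DifferentiableAt ℝ (fun t => (A t).adjugate i j) t0 := by
      simp only [Matrix.adjugate_apply]
      refine det_diffAt _ t0 fun k l => ?_
      by_cases hk : k = j
      · simp only [hk, Matrix.updateRow_self]
        exact differentiableAt_const _
      · simp only [Matrix.updateRow_ne hk]
        exact (hAent k l).differentiableAt
    have hdet : DifferentiableAt ℝ (fun t => (A t).det) t0 :=
      det_diffAt _ t0 fun k l => (hAent k l).differentiableAt
    have heq : (fun t => (A t)⁻¹ i j) = fun t => Ring.inverse (A t).det * (A t).adjugate i j := by
      funext t
      rw [Matrix.inv_def, Matrix.smul_apply, smul_eq_mul]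
    rw [heq]
    simp only [Ring.inverse_eq_inv']
    exact (hdet.inv hdet0).mul hadj
  set B : Matrix (Fin n) (Fin n) ℝ :=
    Matrix.of fun i j => deriv (fun t => (A t)⁻¹ i j) t0 with hBdef
  have hB : ∀ i j, HasDerivAt (fun t => (A t)⁻¹ i j) (B i j) t0 := fun i j =>
    (hinvdiff i j).hasDerivAt
  -- differentiate A t * (A t)⁻¹ = 1
  have hA0inv : A t0 * (A t0)⁻¹ = 1 := Matrix.mul_nonsing_inv _ (hdetU t0 ht0U)
  have hinvA0 : (A t0)⁻¹ * A t0 = 1 := Matrix.nonsing_inv_mul _ (hdetU t0 ht0U)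
  have hkey : A' * (A t0)⁻¹ + A t0 * B = 0 := by
    ext i j
    have h1 : HasDerivAt (fun t => ∑ k, A t i k * (A t)⁻¹ k j)
        (∑ k, (A' i k * (A t0)⁻¹ k j + A t0 i k * B k j)) t0 :=
      HasDerivAt.fun_sum fun k _ => (hAent i k).mul (hB k j)
    have hev : (fun t => ∑ k, A t i k * (A t)⁻¹ k j)
        =ᶠ[nhds t0] fun _ => (1 : Matrix (Fin n) (Fin n) ℝ) i j := by
      filter_upwards [hU] with t ht
      have := Matrix.mul_nonsing_inv (A t) (hdetU t ht)
      calc ∑ k, A t i k * (A t)⁻¹ k j = (A t * (A t)⁻¹) i j := (Matrix.mul_apply).symm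
        _ = (1 : Matrix (Fin n) (Fin n) ℝ) i j := by rw [this]
    have h2 : HasDerivAt (fun t => ∑ k, A t i k * (A t)⁻¹ k j) 0 t0 :=
      (hasDerivAt_const t0 _).congr_of_eventuallyEq hev
    have h3 := h1.unique h2
    simp only [Matrix.add_apply, Matrix.mul_apply, Matrix.zero_apply]
    rw [← Finset.sum_add_distrib]
    exact h3
  have hBeq : B = -((A t0)⁻¹ * A' * (A t0)⁻¹) := by
    have h1 : A t0 * B = -(A' * (A t0)⁻¹) := by
      rw [eq_neg_iff_add_eq_zero, add_comm]; exact hkey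
    calc B = ((A t0)⁻¹ * A t0) * B := by rw [hinvA0, one_mul]
      _ = (A t0)⁻¹ * (A t0 * B) := by rw [mul_assoc]
      _ = (A t0)⁻¹ * (-(A' * (A t0)⁻¹)) := by rw [h1]
      _ = -((A t0)⁻¹ * A' * (A t0)⁻¹) := by rw [mul_neg, mul_assoc]
  -- scalar facts at t0
  have hpi'0 : ∑ i, pi' i = 0 := by
    have h1 : HasDerivAt (fun t => ∑ i, pi t i) (∑ i, pi' i) t0 :=
      HasDerivAt.fun_sum fun i _ => hpi i
    have h2 : HasDerivAt (fun t => ∑ i, pi t i) 0 t0 := by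
      refine (hasDerivAt_const t0 (1 : ℝ)).congr_of_eventuallyEq ?_
      filter_upwards [hU] with t ht using hsum t ht
    exact h1.unique h2
  have hP'row : ∀ i, ∑ j, P' i j = 0 := by
    intro i
    have h1 : HasDerivAt (fun t => ∑ j, P t i j) (∑ j, P' i j) t0 :=
      HasDerivAt.fun_sum fun j _ => hP i j
    have h2 : HasDerivAt (fun t => ∑ j, P t i j) 0 t0 := by
      refine (hasDerivAt_const t0 (1 : ℝ)).congr_of_eventuallyEq ?_
      filter_upwards [hU] with t ht using hrow t ht i
    exact h1.unique h2
  have hstat' : ∀ j, ∑ k, (pi' k * P t0 k j + pi t0 k * P' k j) = pi' j := by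
    intro j
    have h1 : HasDerivAt (fun t => ∑ k, pi t k * P t k j)
        (∑ k, (pi' k * P t0 k j + pi t0 k * P' k j)) t0 :=
      HasDerivAt.fun_sum fun k _ => (hpi k).mul (hP k j)
    have h2 : HasDerivAt (fun t => ∑ k, pi t k * P t k j) (pi' j) t0 := by
      refine (hpi j).congr_of_eventuallyEq ?_
      filter_upwards [hU] with t ht
      have := congrFun (hstat t ht) j
      simpa [Matrix.vecMul, dotProduct] using this
    exact h1.unique h2
  -- matrix identities at t0
  have hstat0 : ∀ j, ∑ k, pi t0 k * P t0 k j = pi t0 j := by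
    intro j
    have := congrFun (hstat t0 ht0U) j
    simpa [Matrix.vecMul, dotProduct] using this
  have hPiP : Pi0 * P t0 = Pi0 := by
    ext i j; simp only [Matrix.mul_apply, hPi0, Matrix.of_apply]; exact hstat0 j
  have hPPi : P t0 * Pi0 = Pi0 := by
    ext i j
    simp only [Matrix.mul_apply, hPi0, Matrix.of_apply, ← Finset.sum_mul]
    rw [hrow t0 ht0U i, one_mul]
  have hPiPi : Pi0 * Pi0 = Pi0 := by
    ext i j
    simp only [Matrix.mul_apply, hPi0, Matrix.of_apply, ← Finset.sum_mul]
    rw [hsum t0 ht0U, one_mul]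
  have hP'Pi : P' * Pi0 = 0 := by
    ext i j
    simp only [Matrix.mul_apply, hPi0, Matrix.of_apply, Matrix.zero_apply, ← Finset.sum_mul]
    rw [hP'row i, zero_mul]
  have hPi1Pi0 : Pi1 * Pi0 = 0 := by
    ext i j
    simp only [Matrix.mul_apply, hPi0, hPi1, Matrix.of_apply, Matrix.zero_apply,
      ← Finset.sum_mul]
    rw [hpi'0, zero_mul]
  have hPi0Pi1 : Pi0 * Pi1 = Pi1 := by
    ext i j
    simp only [Matrix.mul_apply, hPi0, hPi1, Matrix.of_apply, ← Finset.sum_mul]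
    rw [hsum t0 ht0U, one_mul]
  have hPi1stat : Pi1 * P t0 + Pi0 * P' = Pi1 := by
    ext i j
    simp only [Matrix.add_apply, Matrix.mul_apply, hPi0, hPi1, Matrix.of_apply]
    rw [← Finset.sum_add_distrib]
    exact hstat' j
  -- identities with A t0
  have hAt0 : A t0 = 1 - P t0 + Pi0 := rfl
  have hPiA : Pi0 * A t0 = Pi0 := by
    rw [hAt0, mul_add, mul_sub, mul_one, hPiP, hPiPi]; abel
  have hAPi : A t0 * Pi0 = Pi0 := by
    rw [hAt0, add_mul, sub_mul, one_mul, hPPi, hPiPi]; abel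
  have hPiAinv : Pi0 * (A t0)⁻¹ = Pi0 := by
    calc Pi0 * (A t0)⁻¹ = (Pi0 * A t0) * (A t0)⁻¹ := by rw [hPiA]
      _ = Pi0 * (A t0 * (A t0)⁻¹) := by rw [mul_assoc]
      _ = Pi0 := by rw [hA0inv, mul_one]
  have hAinvPi : (A t0)⁻¹ * Pi0 = Pi0 := by
    calc (A t0)⁻¹ * Pi0 = (A t0)⁻¹ * (A t0 * Pi0) := by rw [hAPi]
      _ = ((A t0)⁻¹ * A t0) * Pi0 := by rw [mul_assoc]
      _ = Pi0 := by rw [hinvA0, one_mul]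
  have hPi1A : Pi1 * A t0 = Pi0 * P' := by
    rw [hAt0, mul_add, mul_sub, mul_one, hPi1Pi0]
    have h : Pi1 * P t0 = Pi1 - Pi0 * P' := eq_sub_of_add_eq hPi1stat
    rw [h]; abel
  have hPi1eq : Pi1 = Pi0 * P' * (A t0)⁻¹ := by
    calc Pi1 = Pi1 * (A t0 * (A t0)⁻¹) := by rw [hA0inv, mul_one]
      _ = (Pi1 * A t0) * (A t0)⁻¹ := by rw [mul_assoc]
      _ = Pi0 * P' * (A t0)⁻¹ := by rw [hPi1A]
  -- D at t0
  have hD0 : D t0 = (A t0)⁻¹ - Pi0 := hD t0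
  -- final algebraic identity
  have hfinal : B - Pi1 = D t0 * P' * D t0 - Pi0 * P' * D t0 * D t0 := by
    have hAinvPi1 : (A t0)⁻¹ * Pi1 = Pi1 := by
      calc (A t0)⁻¹ * Pi1 = (A t0)⁻¹ * (Pi0 * Pi1) := by rw [hPi0Pi1]
        _ = ((A t0)⁻¹ * Pi0) * Pi1 := by rw [mul_assoc]
        _ = Pi0 * Pi1 := by rw [hAinvPi]
        _ = Pi1 := hPi0Pi1
    have hBval : B = (A t0)⁻¹ * P' * (A t0)⁻¹ - Pi0 * P' * (A t0)⁻¹ * (A t0)⁻¹ := by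
      rw [hBeq, hA'def, mul_add, add_mul, mul_neg, neg_mul, hAinvPi1, hPi1eq]
      abel
    rw [hD0]
    have hrhs1 : ((A t0)⁻¹ - Pi0) * P' * ((A t0)⁻¹ - Pi0)
        = (A t0)⁻¹ * P' * (A t0)⁻¹ - Pi0 * P' * (A t0)⁻¹ := by
      rw [sub_mul, sub_mul, mul_sub, mul_sub]
      rw [mul_assoc ((A t0)⁻¹) P' Pi0, hP'Pi, mul_zero,
          mul_assoc Pi0 P' Pi0, hP'Pi, mul_zero]
      abel
    have hrhs2 : Pi0 * P' * ((A t0)⁻¹ - Pi0) * ((A t0)⁻¹ - Pi0)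
        = Pi0 * P' * (A t0)⁻¹ * (A t0)⁻¹ := by
      have hd : Pi0 * P' * ((A t0)⁻¹ - Pi0) = Pi0 * P' * (A t0)⁻¹ := by
        rw [mul_sub, mul_assoc Pi0 P' Pi0, hP'Pi, mul_zero, sub_zero]
      rw [hd, mul_sub]
      have h0 : Pi0 * P' * (A t0)⁻¹ * Pi0 = 0 := by
        rw [mul_assoc (Pi0 * P'), hAinvPi, mul_assoc, hP'Pi, mul_zero]
      rw [h0, sub_zero]
    rw [hrhs1, hrhs2, hBval, hPi1eq]
    abel
  -- conclude
  intro i j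
  have hDfun : (fun t => D t i j) = fun t => (A t)⁻¹ i j - pi t j := by
    funext t
    rw [hD t]
    simp [Matrix.sub_apply]
    rfl
  rw [hDfun]
  have h := (hB i j).sub (hpi j)
  refine h.congr_deriv (Eq.symm ?_)
  have := congrFun (congrFun hfinal.symm i) j
  simpa [Matrix.sub_apply, hPi1] using this
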